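/- If T_1 and T_2 are integers with T_1 ≢ T_2 (mod n), then the codes C_{T_1,n} and C_{T_2,n} are disjoint subsets of S_n. -/

import Mathlib

/-- Underlying function of the suffix block transposition `κ_{i,s}`:
`j ↦ j` for `j < i`, and `j ↦ i + ((j - i + s) mod (n - i))` for `i ≤ j ≤ n-1`. -/
def kappaFun (n i s : ℕ) (j : Fin n) : Fin n :=
  if h : (j : ℕ) < i then j
  else ⟨i + (((j : ℕ) - i + s) % (n - i)), by
    have hj := j.isLt
    have hpos : 0 < n - i := by omega
    have hm := Nat.mod_lt ((j : ℕ) - i + s) hpos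
    omega⟩

theorem kappaFun_injective (n i s : ℕ) : Function.Injective (kappaFun n i s) := by
  intro a b hab
  unfold kappaFun at hab
  by_cases ha : (a : ℕ) < i <;> by_cases hb : (b : ℕ) < i
  · rw [dif_pos ha, dif_pos hb] at hab
    exact hab
  · rw [dif_pos ha, dif_neg hb] at hab
    have h := congrArg Fin.val hab
    simp only at h
    omega
  · rw [dif_neg ha, dif_pos hb] at hab
    have h := congrArg Fin.val hab
    simp only at h
    omega
  · rw [dif_neg ha, dif_neg hb] at hab
    have h := congrArg Fin.val hab
    simp only at h
    have h1 : ((a : ℕ) - i + s) % (n - i) = ((b : ℕ) - i + s) % (n - i) := by omega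
    have h2 : ((a : ℕ) - i) % (n - i) = ((b : ℕ) - i) % (n - i) :=
      Nat.ModEq.add_right_cancel' s h1
    have ha' : (a : ℕ) - i < n - i := by have := a.isLt; omega
    have hb' : (b : ℕ) - i < n - i := by have := b.isLt; omega
    rw [Nat.mod_eq_of_lt ha', Nat.mod_eq_of_lt hb'] at h2
    exact Fin.ext (by omega)

/-- The suffix block transposition `κ_{i,s}` as a permutation of `Fin n`. -/
noncomputable def kappa (n i s : ℕ) : Equiv.Perm (Fin n) :=
  Equiv.ofBijective _ (Finite.injective_iff_bijective.mp (kappaFun_injective n i s))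

/-- `V_n`: vectors `[a_0,…,a_{n-1}]` with `1 ≤ a_j ≤ j+1` for each `j`. -/
def Vn (n : ℕ) : Set (Fin n → ℕ) :=
  {a | ∀ j : Fin n, 1 ≤ a j ∧ a j ≤ (j : ℕ) + 1}

/-- `Φ([a_0,…,a_{n-1}]) = κ_{n-2,a_1} ∘ κ_{n-3,a_2} ∘ ⋯ ∘ κ_{1,a_{n-2}} ∘ κ_{0,a_{n-1}}`
(the factor for `j = 0` is `κ_{n-1,a_0}`, which is the identity permutation). -/
noncomputable def Phi (n : ℕ) (a : Fin n → ℕ) : Equiv.Perm (Fin n) :=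
  ((List.finRange n).map (fun (j : Fin n) => kappa n (n - 1 - (j : ℕ)) (a j))).prod

/-- `W_{T,n}`: vectors in `V_n` whose parity (sum of components) is `≡ T (mod n)`. -/
def Wset (n : ℕ) (T : ℤ) : Set (Fin n → ℕ) :=
  {a | a ∈ Vn n ∧ Int.ModEq (n : ℤ) ((∑ j, a j : ℕ) : ℤ) T}

/-- `C_{T,n} = {(Φ(α))⁻¹ : α ∈ W_{T,n}}`. -/
def Cset (n : ℕ) (T : ℤ) : Set (Equiv.Perm (Fin n)) :=
  {π | ∃ a ∈ Wset n T, π = (Phi n a)⁻¹}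

/-- `cinv n π j = π⁻¹(j)` as a natural number (junk value `0` out of range). -/
def cinv (n : ℕ) (π : Equiv.Perm (Fin n)) (j : ℕ) : ℕ :=
  if h : j < n then (π.symm ⟨j, h⟩ : ℕ) else 0

/-- The `i`-th component of a vector indexed by `Fin n` (junk value `0` out of range). -/
def Rcomp (n : ℕ) (v : Fin n → ℕ) (i : ℕ) : ℕ :=
  if h : i < n then v ⟨i, h⟩ else 0

lemma kappa_apply (n i s : ℕ) (j : Fin n) : kappa n i s j = kappaFun n i s j := rfl

lemma kappa_fix (n i s : ℕ) (j : Fin n) (h : (j : ℕ) < i) : kappa n i s j = j := by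
  rw [kappa_apply, kappaFun, dif_pos h]

lemma kappa_special (n i s : ℕ) (hi : i < n) (hs1 : 1 ≤ s) (hs2 : s ≤ n - i) :
    kappa n i s ⟨n - s, by omega⟩ = ⟨i, hi⟩ := by
  rw [kappa_apply, kappaFun]
  rw [dif_neg (by simp; omega)]
  apply Fin.ext
  simp only
  have : (n - s - i + s) = (n - i) := by omega
  rw [this, Nat.mod_self]
  omega

lemma prod_fix {n : ℕ} (l : List (Equiv.Perm (Fin n))) (x : Fin n)
    (h : ∀ p ∈ l, p x = x) : l.prod x = x := by
  induction l with
  | nil => rfl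
  | cons p t ih =>
    simp only [List.prod_cons, Equiv.Perm.mul_apply]
    rw [ih (fun q hq => h q (List.mem_cons_of_mem p hq)), h p List.mem_cons_self]

noncomputable def Sprod (n : ℕ) (a : Fin n → ℕ) (m : ℕ) : Equiv.Perm (Fin n) :=
  (((List.finRange n).drop m).map (fun (j : Fin n) => kappa n (n - 1 - (j : ℕ)) (a j))).prod

noncomputable def Pprod (n : ℕ) (a : Fin n → ℕ) (m : ℕ) : Equiv.Perm (Fin n) :=
  (((List.finRange n).take m).map (fun (j : Fin n) => kappa n (n - 1 - (j : ℕ)) (a j))).prod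

lemma Phi_eq (n : ℕ) (a : Fin n → ℕ) (m : ℕ) : Phi n a = Pprod n a m * Sprod n a m := by
  rw [Phi, Pprod, Sprod, ← List.prod_append, ← List.map_append, List.take_append_drop]

lemma Sprod_top (n : ℕ) (a : Fin n → ℕ) : Sprod n a n = 1 := by
  rw [Sprod, List.drop_eq_nil_of_le (by simp)]
  rfl

lemma Sprod_succ (n : ℕ) (a : Fin n → ℕ) (m : ℕ) (hm : m < n) :
    Sprod n a m = kappa n (n - 1 - m) (a ⟨m, hm⟩) * Sprod n a (m + 1) := by
  have hlen : m < (List.finRange n).length := by simpa using hm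
  rw [Sprod, List.drop_eq_getElem_cons hlen, List.map_cons, List.prod_cons]
  simp [Sprod]

lemma Pprod_fix (n : ℕ) (a : Fin n → ℕ) (m : ℕ) (hm : m < n) :
    Pprod n a m ⟨n - 1 - m, by omega⟩ = ⟨n - 1 - m, by omega⟩ := by
  apply prod_fix
  intro p hp
  simp only [List.mem_map] at hp
  obtain ⟨j, hj, rfl⟩ := hp
  have hjm : (j : ℕ) < m := by
    rw [List.mem_iff_getElem] at hj
    obtain ⟨k, hk, rfl⟩ := hj
    have hk' : k < m := by
      have := hk
      simp [List.length_take] at this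
      omega
    have : k < (List.finRange n).length := by simpa using lt_of_lt_of_le hk' (le_of_lt hm)
    rw [List.getElem_take]
    simp
    omega
  apply kappa_fix
  simp only
  omega

lemma key_step (n : ℕ) (a : Fin n → ℕ) (ha : a ∈ Vn n) (m : ℕ) (hm : m < n) :
    Sprod n a (m + 1) ((Phi n a)⁻¹ ⟨n - 1 - m, by omega⟩)
      = ⟨n - a ⟨m, hm⟩, by have := (ha ⟨m, hm⟩).1; omega⟩ := by
  have hb := ha ⟨m, hm⟩
  set s := a ⟨m, hm⟩ with hs
  have hb2 : s ≤ m + 1 := by simpa using hb.2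
  have hs2 : s ≤ n - (n - 1 - m) := by omega
  have hkey : Phi n a ((Sprod n a (m+1))⁻¹ ⟨n - s, by omega⟩) = ⟨n - 1 - m, by omega⟩ := by
    rw [Phi_eq n a m, Sprod_succ n a m hm]
    simp only [Equiv.Perm.mul_apply]
    rw [(show ∀ (f : Equiv.Perm (Fin n)) x, f (f⁻¹ x) = x from fun f x => f.apply_symm_apply x)]
    rw [kappa_special n (n - 1 - m) s (by omega) hb.1 hs2]
    exact Pprod_fix n a m hm
  rw [← hkey, (show ∀ (f : Equiv.Perm (Fin n)) x, f⁻¹ (f x) = x from fun f x => f.symm_apply_apply x), (show ∀ (f : Equiv.Perm (Fin n)) x, f (f⁻¹ x) = x from fun f x => f.apply_symm_apply x)]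

lemma key (n : ℕ) (a a' : Fin n → ℕ) (ha : a ∈ Vn n) (ha' : a' ∈ Vn n)
    (h : Phi n a = Phi n a') :
    ∀ k m, m + k = n → (∀ j : Fin n, m ≤ (j : ℕ) → a j = a' j) ∧ Sprod n a m = Sprod n a' m := by
  intro k
  induction k with
  | zero =>
    intro m hmn
    constructor
    · intro j hj
      exact absurd j.isLt (by omega)
    · obtain rfl : m = n := by omega
      rw [Sprod_top, Sprod_top]
  | succ k ih =>
    intro m hmn
    have hm : m < n := by omega
    obtain ⟨ihj, ihS⟩ := ih (m + 1) (by omega)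
    have e1 := key_step n a ha m hm
    have e2 := key_step n a' ha' m hm
    rw [h, ihS] at e1
    rw [e2] at e1
    have hval := congrArg Fin.val e1
    simp only at hval
    have hbnd := (ha ⟨m, hm⟩).1
    have hbnd' := (ha' ⟨m, hm⟩).1
    have heq : a' ⟨m, hm⟩ = a ⟨m, hm⟩ := by
      have := (ha ⟨m, hm⟩).2
      have := (ha' ⟨m, hm⟩).2
      omega
    constructor
    · intro j hj
      rcases Nat.eq_or_lt_of_le hj with hj | hj
      · have : j = ⟨m, hm⟩ := Fin.ext hj.symm
        rw [this, heq]
      · exact ihj j hj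
    · rw [Sprod_succ n a m hm, Sprod_succ n a' m hm, ihS, heq]

lemma Phi_inj (n : ℕ) (a a' : Fin n → ℕ) (ha : a ∈ Vn n) (ha' : a' ∈ Vn n)
    (h : Phi n a = Phi n a') : a = a' := by
  funext j
  exact (key n a a' ha ha' h n 0 (by omega)).1 j (Nat.zero_le _)

theorem stmt_2 (n : ℕ) (hn : 2 ≤ n) (T₁ T₂ : ℤ)
    (h : ¬ Int.ModEq (n : ℤ) T₁ T₂) :
    Disjoint (Cset n T₁) (Cset n T₂) := by
  rw [Set.disjoint_left]
  rintro π ⟨a, ⟨haV, haT⟩, rfl⟩ ⟨b, ⟨hbV, hbT⟩, hπ⟩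
  have hphi : Phi n a = Phi n b := inv_injective hπ
  have hab : a = b := Phi_inj n a b haV hbV hphi
  subst hab
  exact h (haT.symm.trans hbT)
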